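/- Let n_a, n_b, n_c ≥ 0 and let ≤ be a linear order on the vertex set of Q(n_a, n_b, n_c). Then Conditions (1) and (2) both hold for (Q(n_a, n_b, n_c), ≤) if and only if at least one of the following holds: (i) there exists k with 1 ≤ k ≤ n_b + 1 such that a_0 > b_i for all 1 ≤ i ≤ k−1 and, in case k ≤ n_b, b_k > a_j for every 0 ≤ j ≤ n_a; or (ii) there exists k with 1 ≤ k ≤ n_c + 1 such that a_0 > c_i for all 1 ≤ i ≤ k−1 and, in case k ≤ n_c, c_k > a_j for every 0 ≤ j ≤ n_a. -/

import Mathlib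

/-- The vertex set of the quiver `Q(n_a, n_b, n_c)`: vertices `a 0, …, a n_a`,
`b 0, …, b (n_b - 1)` (representing `b_1, …, b_{n_b}`) and
`c 0, …, c (n_c - 1)` (representing `c_1, …, c_{n_c}`). -/
inductive QV (na nb nc : ℕ) : Type where
  | a : Fin (na + 1) → QV na nb nc
  | b : Fin nb → QV na nb nc
  | c : Fin nc → QV na nb nc

/-- The arrow relation of `Q(n_a, n_b, n_c)`: arrows `a_i → a_{i-1}`, `a_0 → b_1`,
`b_i → b_{i+1}`, `a_0 → c_1`, `c_i → c_{i+1}`. -/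
def qrel {na nb nc : ℕ} : QV na nb nc → QV na nb nc → Prop
  | .a i, .a j => (i : ℕ) = (j : ℕ) + 1
  | .a i, .b j => (i : ℕ) = 0 ∧ (j : ℕ) = 0
  | .a i, .c j => (i : ℕ) = 0 ∧ (j : ℕ) = 0
  | .b i, .b j => (j : ℕ) = (i : ℕ) + 1
  | .c i, .c j => (j : ℕ) = (i : ℕ) + 1
  | _, _ => False

/-- The quiver `Q(n_a, n_b, n_c)`. -/
instance {na nb nc : ℕ} : Quiver (QV na nb nc) :=
  ⟨fun u v => PLift (qrel u v)⟩

open Quiver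

/-- The path `p` passes through the vertex `k`. -/
def PassesThrough {V : Type*} [Quiver V] {a b : V} (p : Path a b) (k : V) : Prop :=
  ∃ (v : Path a k) (u : Path k b), v.comp u = p

/-- `k` is an inner vertex of `p`. -/
def IsInnerVertex {V : Type*} [Quiver V] {a b : V} (p : Path a b) (k : V) : Prop :=
  ∃ (v : Path a k) (u : Path k b), v.length ≠ 0 ∧ u.length ≠ 0 ∧ v.comp u = p

/-- A nontrivial path `p : i → j` is right-minimal directed if `i < j` and every inner
vertex `k` of `p` satisfies `k ≤ i`. -/
def IsRMD {V : Type*} [Quiver V] [LinearOrder V] {i j : V} (p : Path i j) : Prop :=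
  p.length ≠ 0 ∧ i < j ∧ ∀ k, IsInnerVertex p k → k ≤ i

/-- Condition (1): for all paths `p : i → k` and `q : j → k` with `i < k < j` such that
every vertex passed through by `p` is `≤ k`, there is a path `r : j → i` with `q = p ∘ r`. -/
def Cond1 (V : Type*) [Quiver V] [LinearOrder V] : Prop :=
  ∀ (i k j : V) (p : Path i k) (q : Path j k),
    i < k → k < j → (∀ m, PassesThrough p m → m ≤ k) →
    ∃ r : Path j i, r.comp p = q

/-- Condition (2): for every path `q : j → i` with `i < j`, there is at most one
right-minimal directed path `p` with source `i` and target `< j`. -/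
def Cond2 (V : Type*) [Quiver V] [LinearOrder V] : Prop :=
  ∀ i j : V, i < j → Nonempty (Path j i) →
    ∀ (k k' : V) (p : Path i k) (p' : Path i k'),
      IsRMD p → IsRMD p' → k < j → k' < j → k = k' ∧ HEq p p' 

namespace QVAux

variable {na nb nc : ℕ}

def hgt : QV na nb nc → ℕ
  | .a i => na - (i : ℕ)
  | .b i => na + 1 + (i : ℕ)
  | .c i => na + 1 + (i : ℕ)

def reach : QV na nb nc → QV na nb nc → Prop
  | .a i, .a j => (j : ℕ) ≤ (i : ℕ)
  | .a _, .b _ => True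
  | .a _, .c _ => True
  | .b i, .b j => (i : ℕ) ≤ (j : ℕ)
  | .c i, .c j => (i : ℕ) ≤ (j : ℕ)
  | _, _ => False

lemma hgt_qrel {u v : QV na nb nc} (h : qrel u v) : hgt v = hgt u + 1 := by
  cases u <;> cases v <;> simp only [qrel] at h <;> simp only [hgt] <;>
    rename_i i j <;> (try have hi := i.isLt) <;> (try have hj := j.isLt) <;> omega

lemma path_hgt {u v : QV na nb nc} (p : Path u v) : hgt v = hgt u + p.length := by
  induction p with
  | nil => simp
  | cons q e ih =>
    rw [Quiver.Path.length_cons]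
    have := hgt_qrel e.down
    omega

lemma qrel_unique {w w' v : QV na nb nc} (h : qrel w v) (h' : qrel w' v) : w = w' := by
  cases v <;> cases w <;> cases w' <;> simp only [qrel] at h h' <;>
    first
    | (exact congrArg _ (Fin.ext (by omega)))
    | (exfalso; omega)

instance {u v : QV na nb nc} : Subsingleton (u ⟶ v) :=
  ⟨fun a b => by change PLift (qrel u v) at a b; cases a; cases b; rfl⟩

theorem path_unique {u v : QV na nb nc} (p : Path u v) : ∀ q : Path u v, p = q := by
  induction p with
  | nil =>
    intro q
    cases q with
    | nil => rfl
    | cons q' e =>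
      exfalso
      have h1 := path_hgt (q'.cons e)
      rw [Quiver.Path.length_cons] at h1
      omega
  | cons p' e ih =>
    intro q
    cases q with
    | nil =>
      exfalso
      have h1 := path_hgt (p'.cons e)
      rw [Quiver.Path.length_cons] at h1
      omega
    | cons q' f =>
      obtain rfl := qrel_unique e.down f.down
      obtain rfl : e = f := Subsingleton.elim e f
      rw [ih q']

lemma reach_refl (u : QV na nb nc) : reach u u := by
  cases u <;> simp [reach]

lemma reach_of_qrel {u v : QV na nb nc} (h : qrel u v) : reach u v := by
  cases u <;> cases v <;> simp only [qrel] at h <;> simp only [reach] <;>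
    first | trivial | omega

lemma reach_trans {u w v : QV na nb nc} (h1 : reach u w) (h2 : reach w v) : reach u v := by
  cases u <;> cases w <;> cases v <;> simp only [reach] at * <;> first | trivial | omega

lemma reach_of_path {u v : QV na nb nc} (p : Path u v) : reach u v := by
  induction p with
  | nil => exact reach_refl u
  | cons q e ih => exact reach_trans ih (reach_of_qrel e.down)

lemma reach_step {u v : QV na nb nc} (h : reach u v) (hne : u ≠ v) :
    ∃ w, qrel w v ∧ reach u w := by
  cases u with
  | a i =>
    cases v with
    | a j =>
      simp only [reach] at h
      have hij : (j : ℕ) ≠ (i : ℕ) := fun hh => hne (congrArg _ (Fin.ext hh.symm))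
      have hj : (j : ℕ) + 1 < na + 1 := by have := i.isLt; omega
      exact ⟨.a ⟨(j : ℕ) + 1, hj⟩, by simp [qrel], by simp only [reach]; omega⟩
    | b j =>
      rcases Nat.eq_zero_or_pos (j : ℕ) with h0 | h0
      · exact ⟨.a 0, by simp [qrel, h0], by simp [reach]⟩
      · have hj : (j : ℕ) - 1 < nb := by have := j.isLt; omega
        exact ⟨.b ⟨(j : ℕ) - 1, hj⟩, by simp only [qrel]; omega, by simp only [reach]⟩
    | c j =>
      rcases Nat.eq_zero_or_pos (j : ℕ) with h0 | h0
      · exact ⟨.a 0, by simp [qrel, h0], by simp [reach]⟩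
      · have hj : (j : ℕ) - 1 < nc := by have := j.isLt; omega
        exact ⟨.c ⟨(j : ℕ) - 1, hj⟩, by simp only [qrel]; omega, by simp only [reach]⟩
  | b i =>
    cases v with
    | a j => simp only [reach] at h
    | b j =>
      simp only [reach] at h
      have hij : (i : ℕ) ≠ (j : ℕ) := fun hh => hne (congrArg _ (Fin.ext hh))
      have hj : (j : ℕ) - 1 < nb := by have := j.isLt; omega
      exact ⟨.b ⟨(j : ℕ) - 1, hj⟩, by simp only [qrel]; omega, by simp only [reach]; omega⟩
    | c j => simp only [reach] at h
  | c i =>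
    cases v with
    | a j => simp only [reach] at h
    | b j => simp only [reach] at h
    | c j =>
      simp only [reach] at h
      have hij : (i : ℕ) ≠ (j : ℕ) := fun hh => hne (congrArg _ (Fin.ext hh))
      have hj : (j : ℕ) - 1 < nc := by have := j.isLt; omega
      exact ⟨.c ⟨(j : ℕ) - 1, hj⟩, by simp only [qrel]; omega, by simp only [reach]; omega⟩

lemma reach_nonempty_aux {u : QV na nb nc} :
    ∀ (n : ℕ) (v : QV na nb nc), hgt v ≤ n → reach u v → Nonempty (Path u v) := by
  intro n
  induction n with
  | zero =>
    intro v hv h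
    by_cases he : u = v
    · subst he; exact ⟨Quiver.Path.nil⟩
    · obtain ⟨w, hq, hr⟩ := reach_step h he
      have := hgt_qrel hq
      omega
  | succ n ih =>
    intro v hv h
    by_cases he : u = v
    · subst he; exact ⟨Quiver.Path.nil⟩
    · obtain ⟨w, hq, hr⟩ := reach_step h he
      have hh := hgt_qrel hq
      obtain ⟨p⟩ := ih w (by omega) hr
      exact ⟨p.cons ⟨hq⟩⟩

lemma reach_nonempty {u v : QV na nb nc} (h : reach u v) : Nonempty (Path u v) :=
  reach_nonempty_aux (hgt v) v le_rfl h

lemma eq_of_reach_hgt {u v : QV na nb nc} (h : reach u v) (hh : hgt u = hgt v) : u = v := by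
  cases u <;> cases v <;> simp only [reach] at h <;> simp only [hgt] at hh <;>
    first
    | (exact congrArg _ (Fin.ext (by rename_i i j; have := i.isLt; have := j.isLt; omega)))
    | (exfalso; rename_i i j; have := i.isLt; have := j.isLt; omega)

lemma path_len_ne {u v : QV na nb nc} (p : Path u v) (h : u ≠ v) : p.length ≠ 0 := by
  intro h0
  exact h (eq_of_reach_hgt (reach_of_path p) (by have := path_hgt p; omega))

lemma reach_chain {i j k : QV na nb nc} (h1 : reach i k) (h2 : reach j k) :
    reach i j ∨ reach j i := by
  cases i <;> cases j <;> cases k <;> simp only [reach] at h1 h2 ⊢ <;>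
    first | tauto | omega

lemma passes_iff {u v : QV na nb nc} (p : Path u v) (m : QV na nb nc) :
    PassesThrough p m ↔ reach u m ∧ reach m v := by
  constructor
  · rintro ⟨x, y, -⟩
    exact ⟨reach_of_path x, reach_of_path y⟩
  · rintro ⟨h1, h2⟩
    obtain ⟨x⟩ := reach_nonempty h1
    obtain ⟨y⟩ := reach_nonempty h2
    exact ⟨x, y, path_unique _ p⟩

lemma inner_iff {u v : QV na nb nc} (p : Path u v) (m : QV na nb nc) :
    IsInnerVertex p m ↔ reach u m ∧ reach m v ∧ m ≠ u ∧ m ≠ v := by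
  constructor
  · rintro ⟨x, y, hx, hy, -⟩
    refine ⟨reach_of_path x, reach_of_path y, ?_, ?_⟩
    · rintro rfl
      have := path_hgt x
      exact hx (by omega)
    · rintro rfl
      have := path_hgt y
      exact hy (by omega)
  · rintro ⟨h1, h2, hmu, hmv⟩
    obtain ⟨x⟩ := reach_nonempty h1
    obtain ⟨y⟩ := reach_nonempty h2
    exact ⟨x, y, path_len_ne x hmu.symm, path_len_ne y hmv, path_unique _ p⟩


end QVAux

namespace QVAux

variable {na nb nc : ℕ}

def RHSb (na nb nc : ℕ) [LinearOrder (QV na nb nc)] : Prop :=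
  ∃ k : Fin (nb + 1),
    (∀ i : Fin nb, (i : ℕ) < (k : ℕ) →
      (QV.b i : QV na nb nc) < (QV.a 0 : QV na nb nc)) ∧
    ∀ h : (k : ℕ) < nb, ∀ j : Fin (na + 1),
      (QV.a j : QV na nb nc) < (QV.b ⟨(k : ℕ), h⟩ : QV na nb nc)

def RHSc (na nb nc : ℕ) [LinearOrder (QV na nb nc)] : Prop :=
  ∃ k : Fin (nc + 1),
    (∀ i : Fin nc, (i : ℕ) < (k : ℕ) →
      (QV.c i : QV na nb nc) < (QV.a 0 : QV na nb nc)) ∧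
    ∀ h : (k : ℕ) < nc, ∀ j : Fin (na + 1),
      (QV.a j : QV na nb nc) < (QV.c ⟨(k : ℕ), h⟩ : QV na nb nc)

variable [LinearOrder (QV na nb nc)]

lemma cond1_always : Cond1 (QV na nb nc) := by
  intro i k j p q hik hkj hpass
  rcases reach_chain (reach_of_path p) (reach_of_path q) with hij | hji
  · exfalso
    have : PassesThrough p j := (passes_iff p j).2 ⟨hij, reach_of_path q⟩
    exact absurd (hpass j this) (not_le.2 hkj)
  · obtain ⟨r⟩ := reach_nonempty hji
    exact ⟨r, path_unique _ _⟩

lemma L1 {i k k' : QV na nb nc} (p' : Path i k')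
    (hik : reach i k) (hlt : i < k) (hrmd : IsRMD p') (hkk' : reach k k')
    (hne : k ≠ k') : False := by
  have hk := hrmd.2.2 k ((inner_iff p' k).2 ⟨hik, hkk', ne_of_gt hlt, hne⟩)
  exact absurd hk (not_le.2 hlt)

set_option linter.unusedSectionVars false in
lemma reach_cases {i k k' : QV na nb nc} (h1 : reach i k) (h2 : reach i k') :
    (reach k k' ∨ reach k' k) ∨
    (∃ l t t', i = QV.a l ∧ k = QV.b t ∧ k' = QV.c t') ∨
    (∃ l t t', i = QV.a l ∧ k = QV.c t ∧ k' = QV.b t') := by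
  cases i <;> cases k <;> cases k' <;> simp only [reach] at h1 h2 <;>
    first
    | (left; simp only [reach]; omega)
    | (left; simp only [reach]; tauto)
    | (right; left; exact ⟨_, _, _, rfl, rfl, rfl⟩)
    | (right; right; exact ⟨_, _, _, rfl, rfl, rfl⟩)

lemma rmd_ab {l : Fin (na + 1)} {t : Fin nb}
    (p : Path (QV.a l : QV na nb nc) (QV.b t)) (hp : IsRMD p) :
    (∀ r : Fin (na + 1), (r : ℕ) < (l : ℕ) → (QV.a r : QV na nb nc) < QV.a l) ∧
    (∀ r : Fin nb, (r : ℕ) < (t : ℕ) → (QV.b r : QV na nb nc) < QV.a l) := by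
  constructor
  · intro r hr
    have hne : (QV.a r : QV na nb nc) ≠ QV.a l := by
      intro h
      simp only [QV.a.injEq] at h
      subst h
      exact absurd hr (lt_irrefl _)
    have hle := hp.2.2 (QV.a r) ((inner_iff p _).2
      ⟨by simp only [reach]; omega, by simp only [reach], hne, fun h => nomatch h⟩)
    exact lt_of_le_of_ne hle hne
  · intro r hr
    have hne : (QV.b r : QV na nb nc) ≠ QV.a l := fun h => nomatch h
    have hne2 : (QV.b r : QV na nb nc) ≠ QV.b t := by
      intro h
      simp only [QV.b.injEq] at h
      subst h
      exact absurd hr (lt_irrefl _)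
    have hle := hp.2.2 (QV.b r) ((inner_iff p _).2
      ⟨by simp only [reach], by simp only [reach]; omega, hne, hne2⟩)
    exact lt_of_le_of_ne hle hne

lemma rmd_ac {l : Fin (na + 1)} {t : Fin nc}
    (p : Path (QV.a l : QV na nb nc) (QV.c t)) (hp : IsRMD p) :
    (∀ r : Fin (na + 1), (r : ℕ) < (l : ℕ) → (QV.a r : QV na nb nc) < QV.a l) ∧
    (∀ r : Fin nc, (r : ℕ) < (t : ℕ) → (QV.c r : QV na nb nc) < QV.a l) := by
  constructor
  · intro r hr
    have hne : (QV.a r : QV na nb nc) ≠ QV.a l := by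
      intro h
      simp only [QV.a.injEq] at h
      subst h
      exact absurd hr (lt_irrefl _)
    have hle := hp.2.2 (QV.a r) ((inner_iff p _).2
      ⟨by simp only [reach]; omega, by simp only [reach], hne, fun h => nomatch h⟩)
    exact lt_of_le_of_ne hle hne
  · intro r hr
    have hne : (QV.c r : QV na nb nc) ≠ QV.a l := fun h => nomatch h
    have hne2 : (QV.c r : QV na nb nc) ≠ QV.c t := by
      intro h
      simp only [QV.c.injEq] at h
      subst h
      exact absurd hr (lt_irrefl _)
    have hle := hp.2.2 (QV.c r) ((inner_iff p _).2
      ⟨by simp only [reach], by simp only [reach]; omega, hne, hne2⟩)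
    exact lt_of_le_of_ne hle hne

lemma L2 (hRHS : RHSb na nb nc ∨ RHSc na nb nc) (l s : Fin (na + 1)) (t : Fin nb) (t' : Fin nc)
    (ha : ∀ r : Fin (na + 1), (r : ℕ) < (l : ℕ) → (QV.a r : QV na nb nc) < QV.a l)
    (hb : ∀ r : Fin nb, (r : ℕ) < (t : ℕ) → (QV.b r : QV na nb nc) < QV.a l)
    (hbt : (QV.a l : QV na nb nc) < QV.b t)
    (hc : ∀ r : Fin nc, (r : ℕ) < (t' : ℕ) → (QV.c r : QV na nb nc) < QV.a l)
    (hct : (QV.a l : QV na nb nc) < QV.c t')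
    (hbs : (QV.b t : QV na nb nc) < QV.a s)
    (hcs : (QV.c t' : QV na nb nc) < QV.a s) : False := by
  have ha0 : (QV.a 0 : QV na nb nc) ≤ QV.a l := by
    rcases Nat.eq_zero_or_pos (l : ℕ) with h0 | h0
    · have : (0 : Fin (na + 1)) = l := Fin.ext (by simp [h0])
      rw [this]
    · exact le_of_lt (ha 0 (by simpa using h0))
  rcases hRHS with ⟨K, h1, h2⟩ | ⟨K, h1, h2⟩
  · have hKt : (K : ℕ) ≤ (t : ℕ) := by
      by_contra hlt2
      push_neg at hlt2
      exact absurd hbt (not_lt.2 (le_of_lt (lt_of_lt_of_le (h1 t hlt2) ha0)))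
    have hKnb : (K : ℕ) < nb := lt_of_le_of_lt hKt t.isLt
    have hall := h2 hKnb
    rcases lt_or_eq_of_le hKt with hKlt | hKeq
    · exact absurd (hall l) (not_lt.2 (le_of_lt (hb ⟨(K : ℕ), hKnb⟩ hKlt)))
    · have hKt' : (⟨(K : ℕ), hKnb⟩ : Fin nb) = t := Fin.ext hKeq
      rw [hKt'] at hall
      exact absurd (hall s) (not_lt.2 (le_of_lt hbs))
  · have hKt : (K : ℕ) ≤ (t' : ℕ) := by
      by_contra hlt2
      push_neg at hlt2
      exact absurd hct (not_lt.2 (le_of_lt (lt_of_lt_of_le (h1 t' hlt2) ha0)))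
    have hKnc : (K : ℕ) < nc := lt_of_le_of_lt hKt t'.isLt
    have hall := h2 hKnc
    rcases lt_or_eq_of_le hKt with hKlt | hKeq
    · exact absurd (hall l) (not_lt.2 (le_of_lt (hc ⟨(K : ℕ), hKnc⟩ hKlt)))
    · have hKt' : (⟨(K : ℕ), hKnc⟩ : Fin nc) = t' := Fin.ext hKeq
      rw [hKt'] at hall
      exact absurd (hall s) (not_lt.2 (le_of_lt hcs))

lemma cond2_of_RHS (hRHS : RHSb na nb nc ∨ RHSc na nb nc) : Cond2 (QV na nb nc) := by
  intro i j hij hne k k' p p' hp hp' hkj hk'j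
  obtain ⟨qp⟩ := hne
  have hji := reach_of_path qp
  have hik := reach_of_path p
  have hik' := reach_of_path p'
  have hlti : i < k := hp.2.1
  have hlti' : i < k' := hp'.2.1
  have keq : k = k' := by
    by_contra hkk
    rcases reach_cases hik hik' with (hcmp | hcmp) | hm | hm
    · exact L1 p' hik hlti hp' hcmp hkk
    · exact L1 p hik' hlti' hp hcmp (Ne.symm hkk)
    · obtain ⟨l, t, t', rfl, rfl, rfl⟩ := hm
      cases j with
      | a s =>
        obtain ⟨ha1, hb1⟩ := rmd_ab p hp
        obtain ⟨-, hc1⟩ := rmd_ac p' hp'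
        exact L2 hRHS l s t t' ha1 hb1 hp.2.1 hc1 hp'.2.1 hkj hk'j
      | b x => exact (by simp only [reach] at hji)
      | c x => exact (by simp only [reach] at hji)
    · obtain ⟨l, t, t', rfl, rfl, rfl⟩ := hm
      cases j with
      | a s =>
        obtain ⟨ha1, hc1⟩ := rmd_ac p hp
        obtain ⟨-, hb1⟩ := rmd_ab p' hp'
        exact L2 hRHS l s t' t ha1 hb1 hp'.2.1 hc1 hp.2.1 hk'j hkj
      | b x => exact (by simp only [reach] at hji)
      | c x => exact (by simp only [reach] at hji)
  subst keq
  exact ⟨rfl, heq_of_eq (path_unique p p')⟩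

end QVAux

namespace QVAux

variable {na nb nc : ℕ} [LinearOrder (QV na nb nc)]

lemma RHS_of_cond2 (hC2 : Cond2 (QV na nb nc)) : RHSb na nb nc ∨ RHSc na nb nc := by
  classical
  by_contra hR
  rw [not_or] at hR
  obtain ⟨hRb, hRc⟩ := hR
  -- b arm
  have hexb : ∃ n : ℕ, ∃ h : n < nb, (QV.a 0 : QV na nb nc) < QV.b ⟨n, h⟩ := by
    by_contra hno
    push_neg at hno
    apply hRb
    refine ⟨⟨nb, Nat.lt_succ_self nb⟩, fun i _ => ?_, fun h => absurd h (by simp)⟩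
    rcases lt_trichotomy ((QV.b i : QV na nb nc)) (QV.a 0) with h | h | h
    · exact h
    · exact absurd h (fun hh => nomatch hh)
    · exact absurd h (by simpa using hno i i.isLt)
  set kb := Nat.find hexb with hkbdef
  obtain ⟨hkbnb, hkb⟩ := Nat.find_spec hexb
  have hminb : ∀ r : Fin nb, (r : ℕ) < kb → (QV.b r : QV na nb nc) < QV.a 0 := by
    intro r hr
    have hnr := Nat.find_min hexb hr
    push_neg at hnr
    have := hnr r.isLt
    rcases lt_trichotomy ((QV.b r : QV na nb nc)) (QV.a 0) with h | h | h
    · exact h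
    · exact absurd h (fun hh => nomatch hh)
    · exact absurd h (by simpa using this)
  have hclause2b : ¬ (∀ h : ((⟨kb, by omega⟩ : Fin (nb + 1)) : ℕ) < nb, ∀ j : Fin (na + 1),
      (QV.a j : QV na nb nc) < QV.b ⟨((⟨kb, by omega⟩ : Fin (nb + 1)) : ℕ), h⟩) := by
    intro h2
    exact hRb ⟨⟨kb, by omega⟩, fun i hi => hminb i hi, h2⟩
  push_neg at hclause2b
  obtain ⟨hkbnb', jb, hjb⟩ := hclause2b
  have hjb' : (QV.b ⟨kb, hkbnb⟩ : QV na nb nc) < QV.a jb := by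
    rcases lt_trichotomy ((QV.b (⟨kb, hkbnb⟩ : Fin nb) : QV na nb nc)) (QV.a jb) with h | h | h
    · exact h
    · exact absurd h.symm (fun hh => nomatch hh)
    · exact absurd h (by simpa using hjb)
  -- c arm
  have hexc : ∃ n : ℕ, ∃ h : n < nc, (QV.a 0 : QV na nb nc) < QV.c ⟨n, h⟩ := by
    by_contra hno
    push_neg at hno
    apply hRc
    refine ⟨⟨nc, Nat.lt_succ_self nc⟩, fun i _ => ?_, fun h => absurd h (by simp)⟩
    rcases lt_trichotomy ((QV.c i : QV na nb nc)) (QV.a 0) with h | h | h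
    · exact h
    · exact absurd h (fun hh => nomatch hh)
    · exact absurd h (by simpa using hno i i.isLt)
  set kc := Nat.find hexc with hkcdef
  obtain ⟨hkcnc, hkc⟩ := Nat.find_spec hexc
  have hminc : ∀ r : Fin nc, (r : ℕ) < kc → (QV.c r : QV na nb nc) < QV.a 0 := by
    intro r hr
    have hnr := Nat.find_min hexc hr
    push_neg at hnr
    have := hnr r.isLt
    rcases lt_trichotomy ((QV.c r : QV na nb nc)) (QV.a 0) with h | h | h
    · exact h
    · exact absurd h (fun hh => nomatch hh)
    · exact absurd h (by simpa using this)
  have hclause2c : ¬ (∀ h : ((⟨kc, by omega⟩ : Fin (nc + 1)) : ℕ) < nc, ∀ j : Fin (na + 1),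
      (QV.a j : QV na nb nc) < QV.c ⟨((⟨kc, by omega⟩ : Fin (nc + 1)) : ℕ), h⟩) := by
    intro h2
    exact hRc ⟨⟨kc, by omega⟩, fun i hi => hminc i hi, h2⟩
  push_neg at hclause2c
  obtain ⟨hkcnc', jc, hjc⟩ := hclause2c
  have hjc' : (QV.c ⟨kc, hkcnc⟩ : QV na nb nc) < QV.a jc := by
    rcases lt_trichotomy ((QV.c (⟨kc, hkcnc⟩ : Fin nc) : QV na nb nc)) (QV.a jc) with h | h | h
    · exact h
    · exact absurd h.symm (fun hh => nomatch hh)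
    · exact absurd h (by simpa using hjc)
  -- the max of the a-arm
  obtain ⟨s, hs⟩ := Finite.exists_max (fun r : Fin (na + 1) => (QV.a r : QV na nb nc))
  -- set up the two RMD paths from a 0
  obtain ⟨p⟩ : Nonempty (Path (QV.a 0 : QV na nb nc) (QV.b ⟨kb, hkbnb⟩)) :=
    reach_nonempty (by simp only [reach])
  obtain ⟨p'⟩ : Nonempty (Path (QV.a 0 : QV na nb nc) (QV.c ⟨kc, hkcnc⟩)) :=
    reach_nonempty (by simp only [reach])
  have hrmdp : IsRMD p := by
    refine ⟨path_len_ne p (fun h => nomatch h), hkb, ?_⟩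
    intro m hm
    rw [inner_iff] at hm
    obtain ⟨h1, h2, h3, h4⟩ := hm
    cases m with
    | a r =>
      exfalso
      apply h3
      simp only [reach] at h1
      exact congrArg _ (Fin.ext (by simpa using h1))
    | b r =>
      simp only [reach] at h2
      have hrkb : (r : ℕ) < kb := by
        rcases lt_or_eq_of_le h2 with h | h
        · exact h
        · exact absurd (congrArg QV.b (Fin.ext h)) h4
      exact le_of_lt (hminb r hrkb)
    | c r => exact absurd h2 (by simp only [reach]; exact not_false)
  have hrmdp' : IsRMD p' := by
    refine ⟨path_len_ne p' (fun h => nomatch h), hkc, ?_⟩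
    intro m hm
    rw [inner_iff] at hm
    obtain ⟨h1, h2, h3, h4⟩ := hm
    cases m with
    | a r =>
      exfalso
      apply h3
      simp only [reach] at h1
      exact congrArg _ (Fin.ext (by simpa using h1))
    | c r =>
      simp only [reach] at h2
      have hrkc : (r : ℕ) < kc := by
        rcases lt_or_eq_of_le h2 with h | h
        · exact h
        · exact absurd (congrArg QV.c (Fin.ext h)) h4
      exact le_of_lt (hminc r hrkc)
    | b r => exact absurd h2 (by simp only [reach]; exact not_false)
  have hbs : (QV.b ⟨kb, hkbnb⟩ : QV na nb nc) < QV.a s := lt_of_lt_of_le hjb' (hs jb)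
  have hcs : (QV.c ⟨kc, hkcnc⟩ : QV na nb nc) < QV.a s := lt_of_lt_of_le hjc' (hs jc)
  obtain ⟨qp⟩ : Nonempty (Path (QV.a s : QV na nb nc) (QV.a 0)) :=
    reach_nonempty (by simp [reach])
  have h0s : (QV.a 0 : QV na nb nc) < QV.a s := lt_trans hkb hbs
  obtain ⟨heq, -⟩ := hC2 (QV.a 0) (QV.a s) h0s ⟨qp⟩ _ _ p p' hrmdp hrmdp' hbs hcs
  exact nomatch heq

end QVAux

/-- Conditions (1) and (2) hold for `Q(n_a, n_b, n_c)` with a linear order `≤` on its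
vertices if and only if there is `1 ≤ k ≤ n_b + 1` with `a_0 > b_i` for `1 ≤ i ≤ k - 1`
and (if `k ≤ n_b`) `b_k > a_j` for all `j`, or the analogous condition on the `c`-arm.
(Here `k : Fin (nb + 1)` represents the paper's `k - 1`.) -/
theorem stmt_9 (na nb nc : ℕ) [LinearOrder (QV na nb nc)] :
    (Cond1 (QV na nb nc) ∧ Cond2 (QV na nb nc)) ↔
      ((∃ k : Fin (nb + 1),
          (∀ i : Fin nb, (i : ℕ) < (k : ℕ) →
            (QV.b i : QV na nb nc) < (QV.a 0 : QV na nb nc)) ∧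
          ∀ h : (k : ℕ) < nb, ∀ j : Fin (na + 1),
            (QV.a j : QV na nb nc) < (QV.b ⟨(k : ℕ), h⟩ : QV na nb nc)) ∨
       (∃ k : Fin (nc + 1),
          (∀ i : Fin nc, (i : ℕ) < (k : ℕ) →
            (QV.c i : QV na nb nc) < (QV.a 0 : QV na nb nc)) ∧
          ∀ h : (k : ℕ) < nc, ∀ j : Fin (na + 1),
            (QV.a j : QV na nb nc) < (QV.c ⟨(k : ℕ), h⟩ : QV na nb nc))) := by
  constructor
  · rintro ⟨-, hC2⟩
    exact QVAux.RHS_of_cond2 hC2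
  · intro hRHS
    exact ⟨QVAux.cond1_always, QVAux.cond2_of_RHS hRHS⟩
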